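/- Let k be an algebraically closed field of characteristic zero and r a positive integer. If ρ and ρ' are two liftings of the same projective representation ρ̄ : SL₂(ℤ) → PGL_r(k), then there exists b ∈ k with b¹² = 1 such that ρ'(𝔰) = b⁻³ ρ(𝔰) and ρ'(𝔱) = b ρ(𝔱). In particular, ρ̄ has at most 12 liftings. -/

import Mathlib

open Matrix

namespace LiftAux

lemma center_scalar {k : Type} [Field k] {r : ℕ} {A : GL (Fin r) k}
    (hA : A ∈ Subgroup.center (GL (Fin r) k)) :
    ∃ c : k, (A : Matrix (Fin r) (Fin r) k) = c • (1 : Matrix (Fin r) (Fin r) k) := by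
  have h := Subgroup.mem_center_iff.mp hA
  have hmem : (A : Matrix (Fin r) (Fin r) k) ∈ Set.range (Matrix.scalar (Fin r)) := by
    apply Matrix.mem_range_scalar_of_commute_transvectionStruct
    intro t
    let u : GL (Fin r) k := ⟨t.toMatrix, t.inv.toMatrix, t.mul_inv, t.inv_mul⟩
    have h2 := congrArg Units.val (h u)
    simpa [u, Commute, SemiconjBy] using h2
  obtain ⟨c, hc⟩ := hmem
  exact ⟨c, by rw [← hc, Matrix.scalar_apply, Matrix.smul_one_eq_diagonal]⟩

lemma S_pow_four : ModularGroup.S ^ 4 = 1 := by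
  ext i j
  simp [Matrix.SpecialLinearGroup.coe_pow, ModularGroup.coe_S]
  fin_cases i <;> fin_cases j <;> simp [pow_succ, Matrix.mul_apply, Fin.sum_univ_two]

lemma S_sq_eq : ModularGroup.S ^ 2 = (ModularGroup.S * ModularGroup.T) ^ 3 := by
  ext i j
  simp [Matrix.SpecialLinearGroup.coe_mul, ModularGroup.coe_S, ModularGroup.coe_T, pow_succ,
    Matrix.mul_apply, Fin.sum_univ_two]
  fin_cases i <;> fin_cases j <;> simp

lemma lift_scalar {k : Type} [Field k] {r : ℕ} (hr : 0 < r)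
    (ρ σ : SpecialLinearGroup (Fin 2) ℤ →* GL (Fin r) k)
    (h : (QuotientGroup.mk' (Subgroup.center (GL (Fin r) k))).comp σ =
         (QuotientGroup.mk' (Subgroup.center (GL (Fin r) k))).comp ρ) :
    ∃ b : k, b ^ 12 = 1 ∧
      ((σ ModularGroup.S : Matrix (Fin r) (Fin r) k)
        = (b ^ 3)⁻¹ • (ρ ModularGroup.S : Matrix (Fin r) (Fin r) k)) ∧
      ((σ ModularGroup.T : Matrix (Fin r) (Fin r) k)
        = b • (ρ ModularGroup.T : Matrix (Fin r) (Fin r) k)) := by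
  set i0 : Fin r := ⟨0, hr⟩ with hi0
  have key : ∀ g, ∃ c : k,
      (σ g : Matrix (Fin r) (Fin r) k) = c • (ρ g : Matrix (Fin r) (Fin r) k) := by
    intro g
    have h1 : QuotientGroup.mk' (Subgroup.center (GL (Fin r) k)) (σ g)
        = QuotientGroup.mk' (Subgroup.center (GL (Fin r) k)) (ρ g) := by
      have := DFunLike.congr_fun h g
      simpa using this
    obtain ⟨z, hz, hzz⟩ := (QuotientGroup.mk'_eq_mk' _).mp h1
    obtain ⟨c, hcz⟩ := center_scalar hz
    have hc0 : c ≠ 0 := by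
      intro h0
      have h1' := Units.mul_inv z
      rw [hcz, h0] at h1'
      simp at h1'
      have := congrFun (congrFun h1'.symm i0) i0
      simp at this
    refine ⟨c⁻¹, ?_⟩
    have hval : (σ g : Matrix (Fin r) (Fin r) k) * (c • 1)
        = (ρ g : Matrix (Fin r) (Fin r) k) := by
      have := congrArg Units.val hzz
      rw [Units.val_mul, hcz] at this
      exact this
    have : c • (σ g : Matrix (Fin r) (Fin r) k) = (ρ g : Matrix (Fin r) (Fin r) k) := by
      rw [← hval]; rw [Matrix.mul_smul, Matrix.mul_one]
    rw [← this, smul_smul, inv_mul_cancel₀ hc0, one_smul]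
  have uniq : ∀ (g : SpecialLinearGroup (Fin 2) ℤ) (c c' : k),
      c • (ρ g : Matrix (Fin r) (Fin r) k) = c' • (ρ g : Matrix (Fin r) (Fin r) k) →
      c = c' := by
    intro g c c' hcc
    have h2 := congrArg (fun M => (M * (((ρ g)⁻¹ : GL (Fin r) k) : Matrix (Fin r) (Fin r) k)) i0 i0) hcc
    simp only [smul_mul_assoc, Units.mul_inv, Matrix.smul_apply, Matrix.one_apply_eq,
      smul_eq_mul, mul_one] at h2
    exact h2
  choose χ hχ using key
  have hmul : ∀ g g', χ (g * g') = χ g * χ g' := by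
    intro g g'
    apply uniq (g * g')
    rw [← hχ (g * g'), _root_.map_mul, Units.val_mul, hχ g, hχ g', _root_.map_mul,
      Units.val_mul, smul_mul_assoc, mul_smul_comm, smul_smul]
  have hone : χ 1 = 1 := by
    have h1 := hχ 1
    simp only [_root_.map_one, Units.val_one] at h1
    have := congrFun (congrFun h1 i0) i0
    simpa using this.symm
  have hpow : ∀ (g : SpecialLinearGroup (Fin 2) ℤ) (n : ℕ), χ (g ^ n) = χ g ^ n := by
    intro g n
    induction n with
    | zero => simpa using hone
    | succ m ih => rw [pow_succ, hmul, ih, pow_succ]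
  set b := χ ModularGroup.T with hb
  set s := χ ModularGroup.S with hs
  have e1 : s ^ 4 = 1 := by rw [hs, ← hpow, S_pow_four, hone]
  have e2 : s ^ 2 = (s * b) ^ 3 := by
    rw [hs, hb, ← hmul, ← hpow, ← hpow, ← S_sq_eq]
  have hs0 : s ≠ 0 := by
    intro h0; rw [h0] at e1; norm_num at e1
  have e3 : s * b ^ 3 = 1 := by
    have h4 : s ^ 2 * (s * b ^ 3) = s ^ 2 * 1 := by
      rw [mul_one]
      conv_rhs => rw [e2]
      ring
    exact mul_left_cancel₀ (pow_ne_zero 2 hs0) h4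
  have hb12 : b ^ 12 = 1 := by
    have h5 : (s * b ^ 3) ^ 4 = 1 := by rw [e3]; norm_num
    calc b ^ 12 = 1 * b ^ 12 := by ring
    _ = s ^ 4 * b ^ 12 := by rw [e1]
    _ = (s * b ^ 3) ^ 4 := by ring
    _ = 1 := h5
  have hsb : s = (b ^ 3)⁻¹ := eq_inv_of_mul_eq_one_left e3
  exact ⟨b, hb12, by rw [← hsb]; exact hχ ModularGroup.S, hχ ModularGroup.T⟩
lemma natAbs_emod_lt (a c : ℤ) (hc : c ≠ 0) : (a % c).natAbs < c.natAbs := by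
  have h1 : 0 ≤ a % c := Int.emod_nonneg a hc
  have h2 : a % c < |c| := by
    have := Int.emod_lt a hc
    rwa [Int.natCast_natAbs] at this
  simpa [Int.natAbs_abs] using Int.natAbs_lt_natAbs_of_nonneg_of_lt h1 h2

lemma closure_S_T :
    Subgroup.closure ({ModularGroup.S, ModularGroup.T} : Set (SpecialLinearGroup (Fin 2) ℤ)) = ⊤ := by
  set H := Subgroup.closure ({ModularGroup.S, ModularGroup.T} : Set (SpecialLinearGroup (Fin 2) ℤ))
  have hS : ModularGroup.S ∈ H := Subgroup.subset_closure (by simp)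
  have hT : ModularGroup.T ∈ H := Subgroup.subset_closure (by simp)
  rw [eq_top_iff]
  intro g _
  suffices hmain : ∀ n (g : SpecialLinearGroup (Fin 2) ℤ),
      ((g : Matrix (Fin 2) (Fin 2) ℤ) 1 0).natAbs = n → g ∈ H from hmain _ g rfl
  intro n
  induction n using Nat.strong_induction_on with
  | _ n IH =>
    intro g hn
    by_cases hc : (g : Matrix (Fin 2) (Fin 2) ℤ) 1 0 = 0
    · -- bottom-left entry zero
      have hdet : (g : Matrix (Fin 2) (Fin 2) ℤ).det = 1 := g.property
      rw [Matrix.det_fin_two, hc] at hdet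
      simp only [mul_zero, sub_zero] at hdet
      obtain ⟨ha, hd⟩ | ⟨ha, hd⟩ := Int.mul_eq_one_iff_eq_one_or_neg_one.mp hdet
      · have hg : g = ModularGroup.T ^ ((g : Matrix (Fin 2) (Fin 2) ℤ) 0 1) := by
          ext i j
          rw [ModularGroup.coe_T_zpow]
          fin_cases i <;> fin_cases j <;> simp [ha, hd, hc]
        rw [hg]; exact Subgroup.zpow_mem H hT _
      · have hS2 : ((ModularGroup.S ^ 2 : SpecialLinearGroup (Fin 2) ℤ) : Matrix (Fin 2) (Fin 2) ℤ)
            = -1 := by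
          rw [pow_two, Matrix.SpecialLinearGroup.coe_mul, ModularGroup.S_mul_S_eq]
        have hg : g = ModularGroup.S ^ 2
            * ModularGroup.T ^ (-((g : Matrix (Fin 2) (Fin 2) ℤ) 0 1)) := by
          ext i j
          rw [Matrix.SpecialLinearGroup.coe_mul, ModularGroup.coe_T_zpow, hS2]
          fin_cases i <;> fin_cases j <;>
            simp [ha, hd, hc, Matrix.mul_apply, Fin.sum_univ_two]
        rw [hg]
        exact Subgroup.mul_mem H (Subgroup.pow_mem H hS 2) (Subgroup.zpow_mem H hT _)
    · set a := (g : Matrix (Fin 2) (Fin 2) ℤ) 0 0 with ha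
      set c := (g : Matrix (Fin 2) (Fin 2) ℤ) 1 0 with hcdef
      set q := a / c with hq
      set g' := ModularGroup.S * (ModularGroup.T ^ (-q) * g) with hg'
      have h10 : (g' : Matrix (Fin 2) (Fin 2) ℤ) 1 0 = a % c := by
        rw [hg', Matrix.SpecialLinearGroup.coe_mul, Matrix.SpecialLinearGroup.coe_mul,
          ModularGroup.coe_T_zpow, ModularGroup.coe_S, Int.emod_def]
        simp [Matrix.mul_apply, Matrix.vecMul, dotProduct, Fin.sum_univ_two]
        ring
      have hlt : ((g' : Matrix (Fin 2) (Fin 2) ℤ) 1 0).natAbs < n := by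
        rw [h10, ← hn]; exact natAbs_emod_lt a c hc
      have hg'H : g' ∈ H := IH _ hlt g' rfl
      have hgeq : g = ModularGroup.T ^ q * (ModularGroup.S⁻¹ * g') := by rw [hg']; group
      rw [hgeq]
      exact Subgroup.mul_mem H (Subgroup.zpow_mem H hT q)
        (Subgroup.mul_mem H (Subgroup.inv_mem H hS) hg'H)

lemma hom_ext {G : Type*} [Group G] (f g : SpecialLinearGroup (Fin 2) ℤ →* G)
    (hs : f ModularGroup.S = g ModularGroup.S) (ht : f ModularGroup.T = g ModularGroup.T) :
    f = g := by
  ext x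
  have hx : x ∈ Subgroup.closure ({ModularGroup.S, ModularGroup.T} :
      Set (SpecialLinearGroup (Fin 2) ℤ)) := by
    rw [closure_S_T]; trivial
  induction hx using Subgroup.closure_induction with
  | mem y hy => rcases hy with rfl | rfl
                · exact hs
                · exact ht
  | one => simp
  | mul a b _ _ ha hb => rw [_root_.map_mul, _root_.map_mul, ha, hb]
  | inv a _ ha => rw [_root_.map_inv, _root_.map_inv, ha]

end LiftAux

/-- If `ρ` and `ρ'` are two liftings of the same projective representation
`ρ̄ : SL₂(ℤ) → PGL_r(k)`, then there is `b ∈ k` with `b¹² = 1`, `ρ'(𝔰) = b⁻³ ρ(𝔰)` and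
`ρ'(𝔱) = b ρ(𝔱)`.  In particular `ρ̄` has at most 12 liftings. -/
theorem liftings_differ_by_twelfth_root (k : Type) [Field k] [IsAlgClosed k] [CharZero k]
    (r : ℕ) (hr : 0 < r)
    (ρbar : SpecialLinearGroup (Fin 2) ℤ →* (GL (Fin r) k ⧸ Subgroup.center (GL (Fin r) k)))
    (ρ ρ' : SpecialLinearGroup (Fin 2) ℤ →* GL (Fin r) k)
    (hρ : (QuotientGroup.mk' (Subgroup.center (GL (Fin r) k))).comp ρ = ρbar)
    (hρ' : (QuotientGroup.mk' (Subgroup.center (GL (Fin r) k))).comp ρ' = ρbar) :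
    (∃ b : k, b ^ 12 = 1 ∧
        ((ρ' ModularGroup.S : Matrix (Fin r) (Fin r) k) = (b ^ 3)⁻¹ • (ρ ModularGroup.S : Matrix (Fin r) (Fin r) k)) ∧
        ((ρ' ModularGroup.T : Matrix (Fin r) (Fin r) k) = b • (ρ ModularGroup.T : Matrix (Fin r) (Fin r) k))) ∧
    ({σ : SpecialLinearGroup (Fin 2) ℤ →* GL (Fin r) k |
        (QuotientGroup.mk' (Subgroup.center (GL (Fin r) k))).comp σ = ρbar}.Finite ∧
      {σ : SpecialLinearGroup (Fin 2) ℤ →* GL (Fin r) k |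
        (QuotientGroup.mk' (Subgroup.center (GL (Fin r) k))).comp σ = ρbar}.ncard ≤ 12) := by
  classical
  constructor
  · exact LiftAux.lift_scalar hr ρ ρ' (hρ'.trans hρ.symm)
  · set L := {σ : SpecialLinearGroup (Fin 2) ℤ →* GL (Fin r) k |
        (QuotientGroup.mk' (Subgroup.center (GL (Fin r) k))).comp σ = ρbar} with hL
    set i0 : Fin r := ⟨0, hr⟩ with hi0
    have hmem : ∀ σ ∈ L, ∃ b : k, b ^ 12 = 1 ∧
        ((σ ModularGroup.S : Matrix (Fin r) (Fin r) k)
          = (b ^ 3)⁻¹ • (ρ ModularGroup.S : Matrix (Fin r) (Fin r) k)) ∧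
        ((σ ModularGroup.T : Matrix (Fin r) (Fin r) k)
          = b • (ρ ModularGroup.T : Matrix (Fin r) (Fin r) k)) :=
      fun σ hσ => LiftAux.lift_scalar hr ρ σ (hσ.trans hρ.symm)
    set F : (SpecialLinearGroup (Fin 2) ℤ →* GL (Fin r) k) → k := fun σ =>
      ((σ ModularGroup.T : Matrix (Fin r) (Fin r) k)
        * (((ρ ModularGroup.T)⁻¹ : GL (Fin r) k) : Matrix (Fin r) (Fin r) k)) i0 i0 with hF
    have hFval : ∀ (σ : SpecialLinearGroup (Fin 2) ℤ →* GL (Fin r) k) (b : k),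
        ((σ ModularGroup.T : Matrix (Fin r) (Fin r) k)
          = b • (ρ ModularGroup.T : Matrix (Fin r) (Fin r) k)) → F σ = b := by
      intro σ b hb
      rw [hF]
      simp only [hb, smul_mul_assoc, Units.mul_inv, Matrix.smul_apply, Matrix.one_apply_eq,
        smul_eq_mul, mul_one]
    have hmaps : ∀ σ ∈ L, F σ ∈ {x : k | x ^ 12 = 1} := by
      intro σ hσ
      obtain ⟨b, hb12, _, hbT⟩ := hmem σ hσ
      rw [hFval σ b hbT]
      exact hb12
    have hinj : Set.InjOn F L := by
      intro σ hσ σ' hσ' hFF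
      obtain ⟨b, hb12, hbS, hbT⟩ := hmem σ hσ
      obtain ⟨b', hb12', hbS', hbT'⟩ := hmem σ' hσ'
      rw [hFval σ b hbT, hFval σ' b' hbT'] at hFF
      subst hFF
      apply LiftAux.hom_ext
      · exact Units.ext (hbS.trans hbS'.symm)
      · exact Units.ext (hbT.trans hbT'.symm)
    have hroots : ({x : k | x ^ 12 = 1} : Set k).Finite := by
      apply Set.Finite.subset (Polynomial.nthRootsFinset 12 (1 : k)).finite_toSet
      intro x hx
      rw [Finset.mem_coe, Polynomial.mem_nthRootsFinset (by norm_num : 0 < 12)]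
      exact hx
    have hLfin : L.Finite := by
      apply Set.Finite.of_finite_image _ hinj
      exact hroots.subset (Set.image_subset_iff.mpr hmaps)
    refine ⟨hLfin, ?_⟩
    have h1 : L.ncard ≤ ({x : k | x ^ 12 = 1} : Set k).ncard :=
      Set.ncard_le_ncard_of_injOn F hmaps hinj hroots
    have h2 : ({x : k | x ^ 12 = 1} : Set k).ncard ≤ (Polynomial.nthRootsFinset 12 (1 : k)).card := by
      rw [← Set.ncard_coe_finset]
      apply Set.ncard_le_ncard _ (Polynomial.nthRootsFinset 12 (1 : k)).finite_toSet
      intro x hx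
      rw [Finset.mem_coe, Polynomial.mem_nthRootsFinset (by norm_num : 0 < 12)]
      exact hx
    have h3 : (Polynomial.nthRootsFinset 12 (1 : k)).card ≤ 12 := by
      rw [Polynomial.nthRootsFinset_def]
      exact le_trans (Multiset.toFinset_card_le _)
        (by simpa using Polynomial.card_nthRoots 12 (1 : k))
    omega
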